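/- Let φ : [0,T] → ℝ≥0 be C¹ with compact support in (0,T), and let g : [0,T] → ℝ≥0 be integrable and satisfy −∫₀^T g(t) φ'(t) dt ≤ C ∫₀^T g(t) φ(t) dt for all such φ, and suppose lim_{γ↓0} γ⁻¹ ∫₀^γ g(t) dt = g₀. Then for almost every τ ∈ (0,T) (Lebesgue points of g), g(τ) ≤ e^{Cτ} g₀. -/

import Mathlib

open MeasureTheory Set Filter Topology

noncomputable def trap (a b δ t : ℝ) : ℝ := max 0 (min 1 (min ((t - a) / δ) ((b - t) / δ)))

lemma trap_nonneg (a b δ t : ℝ) : 0 ≤ trap a b δ t := le_max_left _ _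

lemma trap_le_one (a b δ t : ℝ) : trap a b δ t ≤ 1 :=
  max_le zero_le_one (min_le_left _ _)

lemma trap_continuous (a b δ : ℝ) : Continuous (trap a b δ) := by
  unfold trap; fun_prop

lemma trap_eq_zero_left {a δ t : ℝ} (b : ℝ) (hδ : 0 < δ) (h : t ≤ a) : trap a b δ t = 0 := by
  have h1 : (t - a) / δ ≤ 0 := div_nonpos_of_nonpos_of_nonneg (by linarith) hδ.le
  have : min 1 (min ((t - a) / δ) ((b - t) / δ)) ≤ 0 :=
    le_trans (le_trans (min_le_right _ _) (min_le_left _ _)) h1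
  exact max_eq_left this

lemma trap_eq_zero_right {b δ t : ℝ} (a : ℝ) (hδ : 0 < δ) (h : b ≤ t) : trap a b δ t = 0 := by
  have h1 : (b - t) / δ ≤ 0 := div_nonpos_of_nonpos_of_nonneg (by linarith) hδ.le
  have : min 1 (min ((t - a) / δ) ((b - t) / δ)) ≤ 0 :=
    le_trans (le_trans (min_le_right _ _) (min_le_right _ _)) h1
  exact max_eq_left this

lemma trap_eq_one {a b δ t : ℝ} (hδ : 0 < δ) (h1 : a + δ ≤ t) (h2 : t ≤ b - δ) :
    trap a b δ t = 1 := by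
  have e1 : (1:ℝ) ≤ (t - a) / δ := (le_div_iff₀ hδ).2 (by linarith)
  have e2 : (1:ℝ) ≤ (b - t) / δ := (le_div_iff₀ hδ).2 (by linarith)
  have : min 1 (min ((t - a) / δ) ((b - t) / δ)) = 1 :=
    min_eq_left (le_min e1 e2)
  rw [trap, this]; exact max_eq_right zero_le_one

lemma trap_shift (a b δ s t : ℝ) : trap (a + s) (b + s) δ t = trap a b δ (t - s) := by
  unfold trap; ring_nf

/-- Facts about the partial integral `F t = ∫ 0..t f` of a nonnegative continuous
function vanishing outside `[a,b] ⊆ [0,∞)`. -/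
lemma auxF (f : ℝ → ℝ) (hf : Continuous f) (hf0 : ∀ t, 0 ≤ f t) {a b : ℝ}
    (ha : 0 ≤ a) (hab : a ≤ b)
    (hza : ∀ t, t ≤ a → f t = 0) (hzb : ∀ t, b ≤ t → f t = 0) :
    (∀ t, 0 ≤ ∫ u in (0:ℝ)..t, f u) ∧ (∀ t, t ≤ a → (∫ u in (0:ℝ)..t, f u) = 0) ∧
    (∀ t, b ≤ t → (∫ u in (0:ℝ)..t, f u) = ∫ u in (0:ℝ)..b, f u) ∧
    (∀ t, (∫ u in (0:ℝ)..t, f u) ≤ ∫ u in (0:ℝ)..b, f u) := by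
  have hint : ∀ x y : ℝ, IntervalIntegrable f volume x y := fun x y => hf.intervalIntegrable x y
  have hmono : ∀ x y : ℝ, x ≤ y → (∫ u in (0:ℝ)..x, f u) ≤ ∫ u in (0:ℝ)..y, f u := by
    intro x y hxy
    rw [← intervalIntegral.integral_add_adjacent_intervals (hint 0 x) (hint x y)]
    have : 0 ≤ ∫ u in x..y, f u := intervalIntegral.integral_nonneg hxy fun u _ => hf0 u
    linarith
  have hzero : ∀ t, t ≤ a → (∫ u in (0:ℝ)..t, f u) = 0 := by
    intro t ht
    have : EqOn f 0 (Set.uIcc 0 t) := by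
      intro u hu
      rcases Set.mem_uIcc.mp hu with h | h
      · exact hza u (le_trans h.2 ht)
      · exact hza u (le_trans h.2 ha)
    rw [intervalIntegral.integral_congr this]; simp
  have hconst : ∀ t, b ≤ t → (∫ u in (0:ℝ)..t, f u) = ∫ u in (0:ℝ)..b, f u := by
    intro t ht
    rw [← intervalIntegral.integral_add_adjacent_intervals (hint 0 b) (hint b t)]
    have : EqOn f 0 (Set.uIcc b t) := by
      intro u hu
      rcases Set.mem_uIcc.mp hu with h | h
      · exact hzb u h.1
      · exact hzb u (le_trans ht h.1)
    rw [intervalIntegral.integral_congr this]; simp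
  refine ⟨fun t => ?_, hzero, hconst, fun t => ?_⟩
  · rcases le_or_gt t a with h | h
    · rw [hzero t h]
    · have := hmono a t h.le
      rw [hzero a le_rfl] at this; exact this
  · rcases le_or_gt t b with h | h
    · exact hmono t b h
    · rw [hconst t h.le]

/-- Grönwall-type conclusion from the distributional inequality
`−∫ g φ' ≤ C ∫ g φ` for all nonnegative test functions `φ` compactly
supported in `(0,T)`, together with the initial-trace condition
`γ⁻¹ ∫₀^γ g → g₀`: almost every `τ ∈ (0,T)` satisfies `g(τ) ≤ e^{Cτ} g₀`. -/
theorem stmt_12 (T C g₀ : ℝ) (hT : 0 < T) (hC : 0 ≤ C) (hg₀ : 0 ≤ g₀)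
    (g : ℝ → ℝ) (hg_nonneg : ∀ t, 0 ≤ g t)
    (hg_int : IntegrableOn g (Set.Ioo 0 T))
    (hvar : ∀ φ : ℝ → ℝ, ContDiff ℝ 1 φ → (∀ t, 0 ≤ φ t) →
      tsupport φ ⊆ Set.Ioo 0 T →
      -(∫ t in (0:ℝ)..T, g t * deriv φ t) ≤ C * ∫ t in (0:ℝ)..T, g t * φ t)
    (hlim : Tendsto (fun γ : ℝ => γ⁻¹ * ∫ t in (0:ℝ)..γ, g t)
      (nhdsWithin 0 (Set.Ioi 0)) (nhds g₀)) :
    ∀ᵐ τ ∂(volume.restrict (Set.Ioo 0 T)), g τ ≤ Real.exp (C * τ) * g₀ := by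
  classical
  set hfun : ℝ → ℝ := fun t => Real.exp (-(C * t)) * g t with hfun_def
  have hgIoc : IntegrableOn g (Set.Ioc 0 T) := hg_int.congr_set_ae Ioo_ae_eq_Ioc.symm
  have hexple : ∀ t : ℝ, 0 ≤ t → Real.exp (-(C * t)) ≤ 1 := fun t ht =>
    Real.exp_le_one_iff.2 (by nlinarith)
  have hfun_nonneg : ∀ t, 0 ≤ hfun t := fun t =>
    mul_nonneg (Real.exp_nonneg _) (hg_nonneg t)
  have hexpc : Continuous (fun t : ℝ => Real.exp (-(C * t))) := by fun_prop
  have hfun_meas : AEStronglyMeasurable hfun (volume.restrict (Set.Ioc 0 T)) :=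
    hexpc.aestronglyMeasurable.mul hgIoc.1
  have hfunInt : IntegrableOn hfun (Set.Ioc 0 T) := by
    refine Integrable.mono hgIoc hfun_meas ?_
    filter_upwards [ae_restrict_mem measurableSet_Ioc] with t ht
    simp only [hfun_def, norm_mul, Real.norm_eq_abs, Real.abs_exp]
    calc Real.exp (-(C * t)) * |g t| ≤ 1 * |g t| :=
          mul_le_mul_of_nonneg_right (hexple t ht.1.le) (abs_nonneg _)
      _ = |g t| := one_mul _
  set hind : ℝ → ℝ := Set.indicator (Set.Ioo 0 T) hfun with hind_def
  have hindInt : Integrable hind volume :=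
    (integrable_indicator_iff measurableSet_Ioo).2 (hfunInt.mono_set Set.Ioo_subset_Ioc_self)
  have hleb := IsUnifLocDoublingMeasure.ae_tendsto_average_norm_sub
    (μ := (volume : Measure ℝ)) hindInt.locallyIntegrable 1
  rw [ae_restrict_iff' measurableSet_Ioo]
  filter_upwards [hleb] with τ hτleb hτmem
  obtain ⟨hτ0, hτT⟩ := hτmem
  set Avg : ℝ → ℝ := fun r => ⨍ y in Metric.closedBall τ r, ‖hind y - hind τ‖ with Avg_def
  have havg : Tendsto Avg (𝓝[>] (0:ℝ)) (𝓝 0) := by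
    apply hτleb (fun _ => τ) id tendsto_id
    filter_upwards [self_mem_nhdsWithin] with ε hε
    refine Metric.mem_closedBall_self ?_
    have : (0:ℝ) < ε := hε
    simpa using this.le
  -- the eventual inequality
  have key : ∀ᶠ ε in 𝓝[>](0:ℝ),
      hfun τ * (1 - 2*ε) ≤ ε⁻¹ * (∫ t in (0:ℝ)..(ε^2+ε), g t) + 2 * Avg ε := by
    have ev1 : ∀ᶠ ε in 𝓝[>](0:ℝ), ε < 1/2 :=
      Eventually.filter_mono nhdsWithin_le_nhds (gt_mem_nhds (by norm_num))
    have ev2 : ∀ᶠ ε in 𝓝[>](0:ℝ), ε^2 + ε ≤ τ := by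
      have ht : Tendsto (fun ε : ℝ => ε^2 + ε) (𝓝 0) (𝓝 0) := by
        have : Continuous (fun ε : ℝ => ε^2 + ε) := by fun_prop
        simpa using this.tendsto 0
      exact Eventually.filter_mono nhdsWithin_le_nhds
        ((ht.eventually_lt_const hτ0).mono fun x hx => hx.le)
    have ev3 : ∀ᶠ ε in 𝓝[>](0:ℝ), τ + ε < T := by
      have ht : Tendsto (fun ε : ℝ => τ + ε) (𝓝 0) (𝓝 τ) := by
        have : Continuous (fun ε : ℝ => τ + ε) := by fun_prop
        simpa using this.tendsto 0
      exact Eventually.filter_mono nhdsWithin_le_nhds (ht.eventually_lt_const hτT)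
    filter_upwards [self_mem_nhdsWithin, ev1, ev2, ev3] with ε hε hhalf hbτ hτε
    have hε0 : (0:ℝ) < ε := hε
    have hεsq : (0:ℝ) < ε^2 := by positivity
    -- BLOCK
    set up : ℝ → ℝ := trap (ε^2) (ε^2+ε) (ε^2) with up_def
    set dn : ℝ → ℝ := trap τ (τ+ε) (ε^2) with dn_def
    have upcont : Continuous up := trap_continuous _ _ _
    have dncont : Continuous dn := trap_continuous _ _ _
    obtain ⟨upPos, upZero, upConst, upLe⟩ :=
      auxF up upcont (fun t => trap_nonneg _ _ _ t) hεsq.le (by linarith)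
        (fun t ht => trap_eq_zero_left _ hεsq ht) (fun t ht => trap_eq_zero_right _ hεsq ht)
    obtain ⟨dnPos, dnZero, dnConst, dnLe⟩ :=
      auxF dn dncont (fun t => trap_nonneg _ _ _ t) hτ0.le (by linarith)
        (fun t ht => trap_eq_zero_left _ hεsq ht) (fun t ht => trap_eq_zero_right _ hεsq ht)
    have intup : ∀ x y : ℝ, IntervalIntegrable up volume x y := fun x y =>
      upcont.intervalIntegrable x y
    have intdn : ∀ x y : ℝ, IntervalIntegrable dn volume x y := fun x y =>
      dncont.intervalIntegrable x y
    have hshift : ∀ u, dn u = up (u - (τ - ε^2)) := by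
      intro u
      rw [dn_def, up_def]
      show trap τ (τ+ε) (ε^2) u = trap (ε^2) (ε^2+ε) (ε^2) (u - (τ - ε^2))
      unfold trap; ring_nf
    have hAdn : (∫ u in τ..(τ+ε), dn u) = ∫ u in (0:ℝ)..(ε^2+ε), up u := by
      have h3 : (∫ u in τ..(τ+ε), dn u) = ∫ u in (ε^2)..(ε^2+ε), up u := by
        rw [intervalIntegral.integral_congr (g := fun u => up (u - (τ - ε^2)))
          (fun u _ => hshift u)]
        rw [intervalIntegral.integral_comp_sub_right (fun u => up u) (τ - ε^2)]
        have e1 : τ - (τ - ε^2) = ε^2 := by ring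
        have e2 : τ + ε - (τ - ε^2) = ε^2 + ε := by ring
        rw [e1, e2]
      have h4 := intervalIntegral.integral_add_adjacent_intervals (intup 0 (ε^2))
        (intup (ε^2) (ε^2+ε))
      have h5 := upZero (ε^2) le_rfl
      rw [h3]; linarith
    have hdnfull : (∫ u in (0:ℝ)..(τ+ε), dn u) = ∫ u in (0:ℝ)..(ε^2+ε), up u := by
      have h1 := intervalIntegral.integral_add_adjacent_intervals (intdn 0 τ) (intdn τ (τ+ε))
      have h2 := dnZero τ le_rfl
      linarith [hAdn]
    set w : ℝ → ℝ := fun u => up u - dn u with w_def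
    have wcont : Continuous w := upcont.sub dncont
    set ψ : ℝ → ℝ := fun t => ∫ u in (0:ℝ)..t, w u with ψ_def
    have ψsplit : ∀ t, ψ t = (∫ u in (0:ℝ)..t, up u) - ∫ u in (0:ℝ)..t, dn u :=
      fun t => intervalIntegral.integral_sub (intup 0 t) (intdn 0 t)
    have ψnonneg : ∀ t, 0 ≤ ψ t := by
      intro t; rw [ψsplit t]
      rcases le_or_gt t τ with h | h
      · rw [dnZero t h]; have := upPos t; linarith
      · have h1 := upConst t (by linarith)
        have h2 := dnLe t
        rw [hdnfull] at h2
        linarith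
    have ψzero : ∀ t, t ≤ ε^2 ∨ τ + ε ≤ t → ψ t = 0 := by
      intro t ht; rw [ψsplit t]
      rcases ht with h | h
      · rw [upZero t h, dnZero t (by linarith)]; ring
      · rw [upConst t (by linarith), dnConst t h, hdnfull]; ring
    have ψderiv : ∀ t, HasDerivAt ψ (w t) t := fun t =>
      (wcont.integral_hasStrictDerivAt 0 t).hasDerivAt
    have ψcd : ContDiff ℝ 1 ψ := by
      rw [contDiff_one_iff_deriv]
      refine ⟨fun t => (ψderiv t).differentiableAt, ?_⟩
      have : deriv ψ = w := funext fun t => (ψderiv t).deriv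
      rw [this]; exact wcont
    have ψbdd : ∀ t, ‖ψ t‖ ≤ ε^2 + ε := by
      intro t
      rw [Real.norm_eq_abs, abs_of_nonneg (ψnonneg t), ψsplit t]
      have h1 := upLe t
      have h2 := dnPos t
      have h3 : (∫ u in (0:ℝ)..(ε^2+ε), up u) ≤ ε^2 + ε := by
        have hm := intervalIntegral.integral_mono_on (by positivity : (0:ℝ) ≤ ε^2+ε)
          (intup 0 (ε^2+ε)) intervalIntegrable_const (fun u _ => trap_le_one _ _ _ u)
        simpa using hm
      linarith
    set φ : ℝ → ℝ := fun t => Real.exp (-(C*t)) * ψ t with φ_def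
    have expcd : ContDiff ℝ 1 (fun t : ℝ => Real.exp (-(C*t))) :=
      (Real.contDiff_exp.of_le le_top).comp ((contDiff_const.mul contDiff_id).neg)
    have φcd : ContDiff ℝ 1 φ := expcd.mul ψcd
    have φ0 : ∀ t, 0 ≤ φ t := fun t => mul_nonneg (Real.exp_nonneg _) (ψnonneg t)
    have φz : ∀ t, t ≤ ε^2 ∨ τ + ε ≤ t → φ t = 0 := by
      intro t ht
      rw [φ_def]
      simp [ψzero t ht]
    have φsupp : tsupport φ ⊆ Set.Ioo 0 T := by
      have h1 : Function.support φ ⊆ Set.Icc (ε^2) (τ+ε) := by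
        intro t ht
        by_contra hmem
        simp only [Set.mem_Icc, not_and_or, not_le] at hmem
        exact ht (φz t (hmem.imp le_of_lt le_of_lt))
      refine subset_trans (closure_minimal h1 isClosed_Icc) fun t ht => ?_
      exact ⟨lt_of_lt_of_le hεsq ht.1, lt_of_le_of_lt ht.2 hτε⟩
    have φderiv : ∀ t, deriv φ t = -C * φ t + Real.exp (-(C*t)) * w t := by
      intro t
      have h1 : HasDerivAt (fun t : ℝ => -(C*t)) (-C) t := by
        have := (hasDerivAt_id t).const_mul (-C)
        simpa [neg_mul] using this
      have h2 := h1.exp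
      have h3 := h2.mul (ψderiv t)
      rw [φ_def]
      rw [HasDerivAt.deriv (f := fun t => Real.exp (-(C * t)) * ψ t) h3]
      simp only [φ_def]
      ring
    have prodInt : ∀ (ρ : ℝ → ℝ), Continuous ρ → (∃ K, ∀ t, ‖ρ t‖ ≤ K) →
        ∀ x y : ℝ, 0 ≤ x → x ≤ y → y ≤ T →
        IntervalIntegrable (fun t => hfun t * ρ t) volume x y := by
      intro ρ hc hb x y hx hxy hyT
      rw [intervalIntegrable_iff_integrableOn_Ioc_of_le hxy]
      have hsub : Set.Ioc x y ⊆ Set.Ioc 0 T := Set.Ioc_subset_Ioc hx hyT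
      have := (hfunInt.mono_set hsub).bdd_mul hc.aestronglyMeasurable (Filter.Eventually.of_forall hb.choose_spec)
      exact this.congr (Filter.Eventually.of_forall fun t => mul_comm _ _)
    have gInt : ∀ x y : ℝ, 0 ≤ x → x ≤ y → y ≤ T → IntervalIntegrable g volume x y := by
      intro x y hx hxy hyT
      rw [intervalIntegrable_iff_integrableOn_Ioc_of_le hxy]
      exact hgIoc.mono_set (Set.Ioc_subset_Ioc hx hyT)
    have upbd : ∃ K, ∀ t, ‖up t‖ ≤ K :=
      ⟨1, fun t => by
        rw [up_def, Real.norm_eq_abs, abs_of_nonneg (trap_nonneg _ _ _ t)]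
        exact trap_le_one _ _ _ t⟩
    have dnbd : ∃ K, ∀ t, ‖dn t‖ ≤ K :=
      ⟨1, fun t => by
        rw [dn_def, Real.norm_eq_abs, abs_of_nonneg (trap_nonneg _ _ _ t)]
        exact trap_le_one _ _ _ t⟩
    have wbd : ∃ K, ∀ t, ‖w t‖ ≤ K := by
      refine ⟨1, fun t => ?_⟩
      rw [w_def, Real.norm_eq_abs]
      have u1 : up t ≤ 1 := trap_le_one _ _ _ t
      have u0 : 0 ≤ up t := trap_nonneg _ _ _ t
      have d1 : dn t ≤ 1 := trap_le_one _ _ _ t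
      have d0 : 0 ≤ dn t := trap_nonneg _ _ _ t
      rw [abs_le]; constructor <;> simp <;> linarith
    have ψbd : ∃ K, ∀ t, ‖ψ t‖ ≤ K := ⟨ε^2+ε, ψbdd⟩
    have Iψ := prodInt ψ ψcd.continuous ψbd 0 T le_rfl hT.le le_rfl
    have Iw := prodInt w wcont wbd 0 T le_rfl hT.le le_rfl
    have Iup := prodInt up upcont upbd 0 T le_rfl hT.le le_rfl
    have Idn := prodInt dn dncont dnbd 0 T le_rfl hT.le le_rfl
    have hW : 0 ≤ ∫ t in (0:ℝ)..T, hfun t * w t := by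
      have hv := hvar φ φcd φ0 φsupp
      have e1 : (∫ t in (0:ℝ)..T, g t * φ t) = ∫ t in (0:ℝ)..T, hfun t * ψ t :=
        intervalIntegral.integral_congr fun t _ => by
          simp only [φ_def, hfun_def]; ring
      have e2 : (∫ t in (0:ℝ)..T, g t * deriv φ t)
          = -C * (∫ t in (0:ℝ)..T, hfun t * ψ t) + ∫ t in (0:ℝ)..T, hfun t * w t := by
        rw [← intervalIntegral.integral_const_mul,
          ← intervalIntegral.integral_add (Iψ.const_mul (-C)) Iw]
        refine intervalIntegral.integral_congr fun t _ => ?_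
        rw [φderiv t]
        simp only [φ_def, hfun_def]
        ring
      rw [e1, e2] at hv
      linarith
    have hsplitW : (∫ t in (0:ℝ)..T, hfun t * dn t) ≤ ∫ t in (0:ℝ)..T, hfun t * up t := by
      have e : (∫ t in (0:ℝ)..T, hfun t * w t)
          = (∫ t in (0:ℝ)..T, hfun t * up t) - ∫ t in (0:ℝ)..T, hfun t * dn t := by
        rw [← intervalIntegral.integral_sub Iup Idn]
        exact intervalIntegral.integral_congr fun t _ => by
          simp only [w_def]; ring
      linarith
    have hb1 : (0:ℝ) ≤ ε^2 + ε := by positivity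
    have hbT : ε^2 + ε ≤ T := by linarith
    have hupB : (∫ t in (0:ℝ)..T, hfun t * up t) ≤ ∫ t in (0:ℝ)..(ε^2+ε), g t := by
      have hadj := intervalIntegral.integral_add_adjacent_intervals
        (prodInt up upcont upbd 0 (ε^2+ε) le_rfl hb1 hbT)
        (prodInt up upcont upbd (ε^2+ε) T hb1 hbT le_rfl)
      have h0 : (∫ t in (ε^2+ε)..T, hfun t * up t) = 0 := by
        have hz : EqOn (fun t => hfun t * up t) 0 (Set.uIcc (ε^2+ε) T) := by
          intro t ht
          rcases Set.mem_uIcc.mp ht with h | h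
          · have : up t = 0 := trap_eq_zero_right _ hεsq h.1
            simp [this]
          · have : up t = 0 := trap_eq_zero_right _ hεsq (by linarith [h.1])
            simp [this]
        rw [intervalIntegral.integral_congr hz]; simp
      have hmono2 : (∫ t in (0:ℝ)..(ε^2+ε), hfun t * up t) ≤ ∫ t in (0:ℝ)..(ε^2+ε), g t := by
        refine intervalIntegral.integral_mono_on hb1
          (prodInt up upcont upbd 0 (ε^2+ε) le_rfl hb1 hbT)
          (gInt 0 (ε^2+ε) le_rfl hb1 hbT) fun t ht => ?_
        have e1 := hexple t ht.1
        have e0 := Real.exp_nonneg (-(C*t))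
        have u1 : up t ≤ 1 := trap_le_one _ _ _ t
        have u0 : (0:ℝ) ≤ up t := trap_nonneg _ _ _ t
        have g0 := hg_nonneg t
        simp only [hfun_def]
        have p1 : Real.exp (-(C*t)) * g t ≤ g t := by
          nlinarith [mul_nonneg (sub_nonneg.2 e1) g0]
        have p2 : Real.exp (-(C*t)) * g t * up t ≤ Real.exp (-(C*t)) * g t :=
          mul_le_of_le_one_right (mul_nonneg e0 g0) u1
        linarith
      linarith
    have hdnloc : (∫ t in (0:ℝ)..T, hfun t * dn t) = ∫ t in τ..(τ+ε), hfun t * dn t := by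
      have h1 := intervalIntegral.integral_add_adjacent_intervals
        (prodInt dn dncont dnbd 0 τ le_rfl hτ0.le hτT.le)
        (prodInt dn dncont dnbd τ T hτ0.le hτT.le le_rfl)
      have h2 := intervalIntegral.integral_add_adjacent_intervals
        (prodInt dn dncont dnbd τ (τ+ε) hτ0.le (by linarith) (by linarith))
        (prodInt dn dncont dnbd (τ+ε) T (by linarith) (by linarith) le_rfl)
      have z1 : (∫ t in (0:ℝ)..τ, hfun t * dn t) = 0 := by
        have hz : EqOn (fun t => hfun t * dn t) 0 (Set.uIcc 0 τ) := by
          intro t ht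
          rcases Set.mem_uIcc.mp ht with h | h
          · have : dn t = 0 := trap_eq_zero_left _ hεsq h.2
            simp [this]
          · have : dn t = 0 := trap_eq_zero_left _ hεsq (by linarith [h.2])
            simp [this]
        rw [intervalIntegral.integral_congr hz]; simp
      have z2 : (∫ t in (τ+ε)..T, hfun t * dn t) = 0 := by
        have hz : EqOn (fun t => hfun t * dn t) 0 (Set.uIcc (τ+ε) T) := by
          intro t ht
          rcases Set.mem_uIcc.mp ht with h | h
          · have : dn t = 0 := trap_eq_zero_right _ hεsq h.1
            simp [this]
          · have : dn t = 0 := trap_eq_zero_right _ hεsq (by linarith [h.1])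
            simp [this]
        rw [intervalIntegral.integral_congr hz]; simp
      linarith
    have hsub3 : Set.Ioc τ (τ+ε) ⊆ Set.Ioc 0 T := Set.Ioc_subset_Ioc hτ0.le (by linarith)
    have Idiff : IntervalIntegrable (fun u => hfun u - hfun τ) volume τ (τ+ε) := by
      rw [intervalIntegrable_iff_integrableOn_Ioc_of_le (by linarith)]
      exact (hfunInt.mono_set hsub3).sub (integrableOn_const measure_Ioc_lt_top.ne)
    have IdiffAbs : IntervalIntegrable (fun u => |hfun u - hfun τ|) volume τ (τ+ε) := Idiff.abs
    have IdiffDn : IntervalIntegrable (fun u => (hfun u - hfun τ) * dn u) volume τ (τ+ε) := by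
      rw [intervalIntegrable_iff_integrableOn_Ioc_of_le (by linarith)]
      have hdint : IntegrableOn (fun u => hfun u - hfun τ) (Set.Ioc τ (τ+ε)) volume :=
        (hfunInt.mono_set hsub3).sub (integrableOn_const measure_Ioc_lt_top.ne)
      have := hdint.bdd_mul dncont.aestronglyMeasurable (Filter.Eventually.of_forall dnbd.choose_spec)
      exact this.congr (Filter.Eventually.of_forall fun t => mul_comm _ _)
    have IdnLoc := prodInt dn dncont dnbd τ (τ+ε) hτ0.le (by linarith) (by linarith)
    have herr1 : hfun τ * (∫ u in τ..(τ+ε), dn u)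
        ≤ (∫ t in τ..(τ+ε), hfun t * dn t) + ∫ u in τ..(τ+ε), |hfun u - hfun τ| := by
      have hconstdn : IntervalIntegrable (fun u => hfun τ * dn u) volume τ (τ+ε) :=
        (continuous_const.mul dncont).intervalIntegrable _ _
      have e : (∫ t in τ..(τ+ε), hfun t * dn t) - hfun τ * (∫ u in τ..(τ+ε), dn u)
          = ∫ u in τ..(τ+ε), (hfun u - hfun τ) * dn u := by
        rw [← intervalIntegral.integral_const_mul,
          ← intervalIntegral.integral_sub IdnLoc hconstdn]
        exact intervalIntegral.integral_congr fun u _ => by ring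
      have habs : |∫ u in τ..(τ+ε), (hfun u - hfun τ) * dn u|
          ≤ ∫ u in τ..(τ+ε), |hfun u - hfun τ| := by
        refine le_trans (intervalIntegral.abs_integral_le_integral_abs (by linarith)) ?_
        refine intervalIntegral.integral_mono_on (by linarith) IdiffDn.abs IdiffAbs
          fun u hu => ?_
        rw [abs_mul]
        have hd : |dn u| ≤ 1 := by
          rw [dn_def, abs_of_nonneg (trap_nonneg _ _ _ u)]; exact trap_le_one _ _ _ u
        exact mul_le_of_le_one_right (abs_nonneg _) hd
      have hneg := neg_abs_le (∫ u in τ..(τ+ε), (hfun u - hfun τ) * dn u)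
      linarith
    have herr2 : (∫ u in τ..(τ+ε), |hfun u - hfun τ|) ≤ 2 * ε * Avg ε := by
      have e1 : (∫ u in τ..(τ+ε), |hfun u - hfun τ|)
          = ∫ u in τ..(τ+ε), ‖hind u - hind τ‖ := by
        refine intervalIntegral.integral_congr fun u hu => ?_
        rcases Set.mem_uIcc.mp hu with h | h
        · have hu1 : u ∈ Set.Ioo 0 T := ⟨by linarith [h.1], by linarith [h.2]⟩
          have hτ1 : τ ∈ Set.Ioo 0 T := ⟨hτ0, hτT⟩
          rw [hind_def, Set.indicator_of_mem hu1, Set.indicator_of_mem hτ1, Real.norm_eq_abs]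
        · exfalso; linarith [h.1, h.2]
      rw [e1, intervalIntegral.integral_of_le (by linarith)]
      have hsball : Set.Ioc τ (τ+ε) ⊆ Metric.closedBall τ ε := by
        intro x hx
        rw [Real.closedBall_eq_Icc]
        exact ⟨by linarith [hx.1], hx.2⟩
      have hib : IntegrableOn (fun u => ‖hind u - hind τ‖) (Metric.closedBall τ ε) volume :=
        ((hindInt.integrableOn).sub (integrableOn_const measure_closedBall_lt_top.ne)).norm
      have h3 := setIntegral_mono_set hib (Filter.Eventually.of_forall fun u => norm_nonneg _)
        (HasSubset.Subset.eventuallyLE hsball)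
      have h4 : (∫ u in Metric.closedBall τ ε, ‖hind u - hind τ‖) = 2 * ε * Avg ε := by
        simp only [Avg_def]
        rw [setAverage_eq, Real.volume_real_closedBall (by linarith),
          smul_eq_mul, ← mul_assoc, mul_inv_cancel₀ (by linarith), one_mul]
      linarith
    have hA : ε - 2*ε^2 ≤ ∫ u in τ..(τ+ε), dn u := by
      have o1 : τ ≤ τ + ε^2 := by linarith
      have o2 : τ + ε^2 ≤ τ + ε - ε^2 := by nlinarith
      have o3 : τ + ε - ε^2 ≤ τ + ε := by linarith
      have s1 := intervalIntegral.integral_add_adjacent_intervals (intdn τ (τ+ε^2))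
        (intdn (τ+ε^2) (τ+ε-ε^2))
      have s2 := intervalIntegral.integral_add_adjacent_intervals (intdn τ (τ+ε-ε^2))
        (intdn (τ+ε-ε^2) (τ+ε))
      have n1 : 0 ≤ ∫ u in τ..(τ+ε^2), dn u :=
        intervalIntegral.integral_nonneg o1 fun u _ => trap_nonneg _ _ _ u
      have n3 : 0 ≤ ∫ u in (τ+ε-ε^2)..(τ+ε), dn u :=
        intervalIntegral.integral_nonneg o3 fun u _ => trap_nonneg _ _ _ u
      have mid : (∫ u in (τ+ε^2)..(τ+ε-ε^2), dn u) = ε - 2*ε^2 := by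
        have hz : EqOn dn (fun _ => (1:ℝ)) (Set.uIcc (τ+ε^2) (τ+ε-ε^2)) := by
          intro u hu
          rcases Set.mem_uIcc.mp hu with h | h
          · exact trap_eq_one hεsq h.1 (by linarith [h.2])
          · exact trap_eq_one hεsq (by linarith [h.1]) (by linarith [h.2])
        rw [intervalIntegral.integral_congr hz, intervalIntegral.integral_const]
        simp; ring
      linarith
    have hAdn' : hfun τ * (ε - 2*ε^2) ≤ (∫ t in (0:ℝ)..(ε^2+ε), g t) + 2 * ε * Avg ε := by
      have c1 : hfun τ * (ε - 2*ε^2) ≤ hfun τ * (∫ u in τ..(τ+ε), dn u) :=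
        mul_le_mul_of_nonneg_left hA (hfun_nonneg τ)
      linarith
    have hne : ε ≠ 0 := hε0.ne'
    calc hfun τ * (1 - 2*ε) = hfun τ * (ε - 2*ε^2) * ε⁻¹ := by
          field_simp
      _ ≤ ((∫ t in (0:ℝ)..(ε^2+ε), g t) + 2 * ε * Avg ε) * ε⁻¹ :=
          mul_le_mul_of_nonneg_right hAdn' (by positivity)
      _ = ε⁻¹ * (∫ t in (0:ℝ)..(ε^2+ε), g t) + 2 * Avg ε := by
          field_simp

  -- pass to the limit
  have hfg : hfun τ ≤ g₀ := by
    have hL : Tendsto (fun ε : ℝ => hfun τ * (1 - 2*ε)) (𝓝[>](0:ℝ)) (𝓝 (hfun τ)) := by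
      have : Continuous (fun ε : ℝ => hfun τ * (1 - 2*ε)) := by fun_prop
      have := this.tendsto 0
      simp only [mul_zero, sub_zero, mul_one] at this
      exact this.mono_left nhdsWithin_le_nhds
    have hR : Tendsto (fun ε : ℝ => ε⁻¹ * (∫ t in (0:ℝ)..(ε^2+ε), g t) + 2 * Avg ε)
        (𝓝[>](0:ℝ)) (𝓝 g₀) := by
      have h1 : Tendsto (fun ε : ℝ => ε^2 + ε) (𝓝[>](0:ℝ)) (𝓝[>](0:ℝ)) := by
        rw [tendsto_nhdsWithin_iff]
        constructor
        · have : Continuous (fun ε : ℝ => ε^2 + ε) := by fun_prop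
          have := this.tendsto 0
          simp only [ne_eq, OfNat.ofNat_ne_zero, not_false_eq_true, zero_pow, add_zero] at this
          exact this.mono_left nhdsWithin_le_nhds
        · filter_upwards [self_mem_nhdsWithin] with ε hε
          have : (0:ℝ) < ε := hε
          have : (0:ℝ) < ε^2 + ε := by positivity
          exact this
      have h2 : Tendsto (fun ε : ℝ => (ε^2+ε)⁻¹ * ∫ t in (0:ℝ)..(ε^2+ε), g t)
          (𝓝[>](0:ℝ)) (𝓝 g₀) := hlim.comp h1
      have h3 : Tendsto (fun ε : ℝ => (ε + 1) * ((ε^2+ε)⁻¹ * ∫ t in (0:ℝ)..(ε^2+ε), g t))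
          (𝓝[>](0:ℝ)) (𝓝 (1 * g₀)) := by
        apply Tendsto.mul _ h2
        have : Tendsto (fun ε : ℝ => ε + 1) (𝓝 (0:ℝ)) (𝓝 1) := by
          have : Continuous (fun ε : ℝ => ε + 1) := by fun_prop
          simpa using this.tendsto 0
        exact this.mono_left nhdsWithin_le_nhds
      rw [one_mul] at h3
      have h4 : Tendsto (fun ε : ℝ => ε⁻¹ * ∫ t in (0:ℝ)..(ε^2+ε), g t)
          (𝓝[>](0:ℝ)) (𝓝 g₀) := by
        apply h3.congr'
        filter_upwards [self_mem_nhdsWithin] with ε hε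
        have hε0 : (0:ℝ) < ε := hε
        have he1 : ε + 1 ≠ 0 := by positivity
        have : ε^2 + ε = ε * (ε + 1) := by ring
        rw [this, mul_inv]
        field_simp
      have h5 : Tendsto (fun ε : ℝ => 2 * Avg ε) (𝓝[>](0:ℝ)) (𝓝 (2 * 0)) :=
        havg.const_mul 2
      rw [mul_zero] at h5
      simpa using h4.add h5
    exact le_of_tendsto_of_tendsto hL hR key
  have hgτ : g τ = Real.exp (C * τ) * hfun τ := by
    simp only [hfun_def, ← mul_assoc, ← Real.exp_add]
    simp
  rw [hgτ]
  exact mul_le_mul_of_nonneg_left hfg (Real.exp_nonneg _)
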